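/- Let R be a commutative ring and let h, j : ℕ → R be sequences with h 0 = 1 and j 1 = 1 satisfying equation (D1): n·h_n = Σ_{r=1}^{n} j_r · h_{n-r} for all n ≥ 1. For n ≥ 1 let J_n(j̄) be the n×n matrix over R whose entry in row i and column k (1 ≤ i,k ≤ n) equals j_{i-k+1} if k ≤ i, equals -(i·1_R) if k = i+1, and equals 0 if k > i+1. Then for every 0 ≤ k ≤ n, the sum of the determinants of all k×k principal submatrices of J_n(j̄) equals (k!) · C(n,k) · h_k; that is, Σ_{S ⊆ {1,…,n}, #S = k} det(J_n(j̄)[S,S]) = (k!) · C(n,k) · h_k. -/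

import Mathlib

open Finset Matrix

/-- The matrix `J_n(j̄)`: entries `j (i - k + 1)` in (1-based) row `i`, column `k` for
`k ≤ i`, superdiagonal entry `-i` in row `i`, column `i + 1`, and `0` above the
superdiagonal. -/
def Jmat {R : Type*} [CommRing R] (j : ℕ → R) (n : ℕ) : Matrix (Fin n) (Fin n) R :=
  Matrix.of fun i k =>
    if (k : ℕ) ≤ (i : ℕ) then j ((i : ℕ) - (k : ℕ) + 1)
    else if (k : ℕ) = (i : ℕ) + 1 then -(((i : ℕ) + 1 : ℕ) : R)
    else 0

namespace JmatAux

variable {R : Type*} [CommRing R]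

/-- Entry function with 1-based absolute indices. -/
def fE (j : ℕ → R) (i k : ℕ) : R :=
  if k ≤ i then j (i - k + 1) else if k = i + 1 then -(i : R) else 0

/-- Determinant of the matrix described by a list of (row, col) absolute indices. -/
def Dpl (j : ℕ → R) (l : List (ℕ × ℕ)) : R :=
  (Matrix.of fun i k : Fin l.length =>
    fE j (l.getD (i : ℕ) (0, 0)).1 (l.getD (k : ℕ) (0, 0)).2).det

def dupL (G : List ℕ) : List (ℕ × ℕ) := G.map fun g => (g, g)

/-- Principal minor determinant for the (descending) list of 1-based indices `G`. -/
def Pdet (j : ℕ → R) (G : List ℕ) : R := Dpl j (dupL G)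

/-- Mixed minor: first row has absolute row index `r` and column index `c`,
the rest is principal on `G`. -/
def Dm (j : ℕ → R) (r c : ℕ) (G : List ℕ) : R := Dpl j ((r, c) :: dupL G)

lemma fE_of_le (j : ℕ → R) {r c : ℕ} (h : c ≤ r) : fE j r c = j (r - c + 1) :=
  if_pos h

lemma fE_of_gt (j : ℕ → R) {r c : ℕ} (h : r + 1 < c) : fE j r c = 0 := by
  rw [fE, if_neg (by omega), if_neg (by omega)]

lemma fE_succ_self (j : ℕ → R) (g : ℕ) : fE j g (g + 1) = -(g : R) := by
  rw [fE, if_neg (by omega), if_pos rfl]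

lemma Dpl_nil (j : ℕ → R) : Dpl j [] = 1 := Matrix.det_fin_zero

lemma Pdet_nil (j : ℕ → R) : Pdet j [] = 1 := Matrix.det_fin_zero

lemma Pdet_cons (j : ℕ → R) (g : ℕ) (G : List ℕ) : Pdet j (g :: G) = Dm j g g G := rfl

lemma getD_mem {α : Type*} (t : List α) (d : α) (i : Fin t.length) :
    t.getD (i : ℕ) d ∈ t := by
  rw [List.getD_eq_getElem _ _ i.isLt]
  exact List.getElem_mem _

/-- Laplace expansion along column zero when all rows below the first give zero entries. -/
lemma Dpl_cons_zero (j : ℕ → R) (p : ℕ × ℕ) (t : List (ℕ × ℕ))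
    (h : ∀ q ∈ t, fE j q.1 p.2 = 0) :
    Dpl j (p :: t) = fE j p.1 p.2 * Dpl j t := by
  have h0 : Dpl j (p :: t) = (Matrix.of fun i k : Fin (t.length + 1) =>
      fE j ((p :: t).getD (i : ℕ) (0, 0)).1 ((p :: t).getD (k : ℕ) (0, 0)).2).det := rfl
  rw [h0, Matrix.det_succ_column_zero, Fin.sum_univ_succ]
  set A := Matrix.of fun i k : Fin (t.length + 1) =>
      fE j ((p :: t).getD (i : ℕ) (0, 0)).1 ((p :: t).getD (k : ℕ) (0, 0)).2 with hA
  have h2 : ∀ i : Fin t.length, (-1 : R) ^ ((i.succ : Fin (t.length + 1)) : ℕ) *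
      A i.succ 0 * ((A.submatrix i.succ.succAbove Fin.succ)).det = 0 := by
    intro i
    have hz : A i.succ 0 = 0 := by
      have : A i.succ 0 = fE j (t.getD (i : ℕ) (0, 0)).1 p.2 := by
        simp [hA, Matrix.of_apply, Fin.val_succ, List.getD_cons_succ]
      rw [this]
      exact h _ (getD_mem t (0, 0) i)
    simp [hz]
  rw [Finset.sum_eq_zero fun i _ => h2 i, add_zero]
  have hm : A.submatrix (Fin.succAbove 0) Fin.succ =
      Matrix.of (fun i k : Fin t.length =>
        fE j (t.getD (i : ℕ) (0, 0)).1 (t.getD (k : ℕ) (0, 0)).2) := by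
    ext i k
    simp [hA, Matrix.submatrix_apply, Fin.succAbove_zero, Fin.val_succ, List.getD_cons_succ]
  rw [hm]
  have e0 : A 0 0 = fE j p.1 p.2 := rfl
  rw [e0]
  simp [Dpl]

/-- Laplace expansion along column zero when only the first two rows may give
nonzero entries in column zero. -/
lemma Dpl_cons_one (j : ℕ → R) (p p' : ℕ × ℕ) (t : List (ℕ × ℕ))
    (h : ∀ q ∈ t, fE j q.1 p.2 = 0) :
    Dpl j (p :: p' :: t) =
      fE j p.1 p.2 * Dpl j (p' :: t) - fE j p'.1 p.2 * Dpl j ((p.1, p'.2) :: t) := by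
  have h0 : Dpl j (p :: p' :: t) = (Matrix.of fun i k : Fin (t.length + 1 + 1) =>
      fE j ((p :: p' :: t).getD (i : ℕ) (0, 0)).1
        ((p :: p' :: t).getD (k : ℕ) (0, 0)).2).det := rfl
  rw [h0, Matrix.det_succ_column_zero, Fin.sum_univ_succ, Fin.sum_univ_succ]
  set A := Matrix.of fun i k : Fin (t.length + 1 + 1) =>
      fE j ((p :: p' :: t).getD (i : ℕ) (0, 0)).1 ((p :: p' :: t).getD (k : ℕ) (0, 0)).2 with hA
  have h2 : ∀ i : Fin t.length, (-1 : R) ^ ((i.succ.succ : Fin (t.length + 1 + 1)) : ℕ) *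
      A i.succ.succ 0 * ((A.submatrix i.succ.succ.succAbove Fin.succ)).det = 0 := by
    intro i
    have hz : A i.succ.succ 0 = 0 := by
      have : A i.succ.succ 0 = fE j (t.getD (i : ℕ) (0, 0)).1 p.2 := by
        simp [hA, Matrix.of_apply, Fin.val_succ, List.getD_cons_succ]
      rw [this]
      exact h _ (getD_mem t (0, 0) i)
    simp [hz]
  rw [Finset.sum_eq_zero fun i _ => h2 i, add_zero]
  simp only [Fin.succ_zero_eq_one]
  have hm0 : A.submatrix (Fin.succAbove 0) Fin.succ =
      Matrix.of (fun i k : Fin (t.length + 1) =>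
        fE j ((p' :: t).getD (i : ℕ) (0, 0)).1 ((p' :: t).getD (k : ℕ) (0, 0)).2) := by
    ext i k
    simp [hA, Matrix.submatrix_apply, Fin.succAbove_zero, Fin.val_succ, List.getD_cons_succ]
  have hm1 : A.submatrix (Fin.succAbove 1) Fin.succ =
      Matrix.of (fun i k : Fin (t.length + 1) =>
        fE j (((p.1, p'.2) :: t).getD (i : ℕ) (0, 0)).1
          (((p.1, p'.2) :: t).getD (k : ℕ) (0, 0)).2) := by
    ext i k
    induction i using Fin.cases with
    | zero =>
        have hsa : (1 : Fin (t.length + 1 + 1)).succAbove 0 = 0 :=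
          Fin.succAbove_of_castSucc_lt 1 0 (by simp [Fin.lt_def])
        induction k using Fin.cases with
        | zero => simp [hA, Matrix.submatrix_apply, hsa, Fin.val_succ, List.getD_cons_succ]
        | succ k => simp [hA, Matrix.submatrix_apply, hsa, Fin.val_succ, List.getD_cons_succ]
    | succ i =>
        have hsa : (1 : Fin (t.length + 1 + 1)).succAbove i.succ = i.succ.succ :=
          Fin.succAbove_of_le_castSucc 1 i.succ (by simp [Fin.le_def])
        induction k using Fin.cases with
        | zero => simp [hA, Matrix.submatrix_apply, hsa, Fin.val_succ, List.getD_cons_succ]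
        | succ k => simp [hA, Matrix.submatrix_apply, hsa, Fin.val_succ, List.getD_cons_succ]
  rw [hm0, hm1]
  have e0 : A 0 0 = fE j p.1 p.2 := rfl
  have e1 : A 1 0 = fE j p'.1 p.2 := rfl
  rw [e0, e1]
  have hd0 : Dpl j (p' :: t) = (Matrix.of (fun i k : Fin (t.length + 1) =>
      fE j ((p' :: t).getD (i : ℕ) (0, 0)).1 ((p' :: t).getD (k : ℕ) (0, 0)).2)).det := rfl
  have hd1 : Dpl j ((p.1, p'.2) :: t) = (Matrix.of (fun i k : Fin (t.length + 1) =>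
      fE j (((p.1, p'.2) :: t).getD (i : ℕ) (0, 0)).1
        (((p.1, p'.2) :: t).getD (k : ℕ) (0, 0)).2)).det := rfl
  rw [← hd0, ← hd1]
  simp only [Fin.val_zero, Fin.val_one, pow_zero, pow_one]
  ring

lemma Dm_lt (j : ℕ → R) {r c : ℕ} {G : List ℕ} (hG : ∀ x ∈ G, x + 1 < c) (hcr : c ≤ r) :
    Dm j r c G = j (r - c + 1) * Pdet j G := by
  have h : ∀ q ∈ dupL G, fE j q.1 (r, c).2 = 0 := by
    intro q hq
    rcases List.mem_map.mp hq with ⟨x, hx, rfl⟩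
    exact fE_of_gt j (hG x hx)
  have := Dpl_cons_zero j (r, c) (dupL G) h
  rw [Dm, this, fE_of_le j hcr, Pdet]

lemma Dm_eq (j : ℕ → R) {r g : ℕ} {G : List ℕ} (hG : ∀ x ∈ G, x + 1 < g + 1)
    (hgr : g + 1 ≤ r) :
    Dm j r (g + 1) (g :: G) =
      j (r - g) * Pdet j (g :: G) + (g : R) * Dm j r g G := by
  have h : ∀ q ∈ dupL G, fE j q.1 (r, g + 1).2 = 0 := by
    intro q hq
    rcases List.mem_map.mp hq with ⟨x, hx, rfl⟩
    exact fE_of_gt j (hG x hx)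
  have hmain := Dpl_cons_one j (r, g + 1) (g, g) (dupL G) h
  have hfold : Dm j r (g + 1) (g :: G) = Dpl j ((r, g + 1) :: (g, g) :: dupL G) := rfl
  rw [hfold, hmain, fE_of_le j hgr, fE_succ_self,
    show r - (g + 1) + 1 = r - g from by omega]
  have : Dpl j ((g, g) :: dupL G) = Pdet j (g :: G) := rfl
  rw [this]
  have : Dpl j (((r, g + 1).1, (g, g).2) :: dupL G) = Dm j r g G := rfl
  rw [this]
  ring

namespace S

variable {M : Type*} [AddCommMonoid M]

lemma sum_powersetCard_insert {a : ℕ} {s : Finset ℕ} (ha : a ∉ s) (k : ℕ)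
    (F : Finset ℕ → M) :
    ∑ T ∈ (insert a s).powersetCard (k + 1), F T =
      ∑ T ∈ s.powersetCard (k + 1), F T + ∑ T ∈ s.powersetCard k, F (insert a T) := by
  rw [Finset.powersetCard_succ_insert ha, Finset.sum_union, Finset.sum_image]
  · intro T hT T' hT' hE
    have haT : a ∉ T := fun hmem => ha ((Finset.mem_powersetCard.mp hT).1 hmem)
    have haT' : a ∉ T' := fun hmem => ha ((Finset.mem_powersetCard.mp hT').1 hmem)
    have : (insert a T).erase a = (insert a T').erase a := by rw [hE]
    rwa [Finset.erase_insert haT, Finset.erase_insert haT'] at this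
  · rw [Finset.disjoint_left]
    intro T hT hT'
    rcases Finset.mem_image.mp hT' with ⟨T', _, rfl⟩
    exact ha ((Finset.mem_powersetCard.mp hT).1 (Finset.mem_insert_self a T'))

lemma Icc_one_succ (w : ℕ) : Finset.Icc 1 (w + 1) = insert (w + 1) (Finset.Icc 1 w) := by
  ext x
  simp only [Finset.mem_Icc, Finset.mem_insert]
  omega

end S

section Main

variable {R : Type*} [CommRing R]

/-- sum over all k-element subsets of `{1,…,q}` of the corresponding principal minors. -/
def Wsum (j : ℕ → R) (q k : ℕ) : R :=
  ∑ S ∈ (Finset.Icc 1 q).powersetCard k, Pdet j (S.sort (· ≥ ·))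

/-- sum over m-element subsets of `{1,…,w}` of the mixed minors with head row `w+1+e`,
head column `w+1`. -/
def Xsum (j : ℕ → R) (w e m : ℕ) : R :=
  ∑ G ∈ (Finset.Icc 1 w).powersetCard m, Dm j (w + 1 + e) (w + 1) (G.sort (· ≥ ·))

lemma sort_insert_top {a : ℕ} {s : Finset ℕ} (h : ∀ b ∈ s, b < a) :
    (insert a s).sort (· ≥ ·) = a :: s.sort (· ≥ ·) :=
  Finset.sort_insert _ (fun b hb => le_of_lt (h b hb)) (fun hmem => lt_irrefl a (h a hmem))

lemma mem_sort_lt {w m : ℕ} {S : Finset ℕ} (hS : S ∈ (Finset.Icc 1 w).powersetCard m)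
    {x : ℕ} (hx : x ∈ S.sort (· ≥ ·)) : 1 ≤ x ∧ x ≤ w := by
  have := (Finset.mem_powersetCard.mp hS).1 (Finset.mem_sort (α := ℕ) (· ≥ ·) |>.mp hx)
  simpa using this


lemma not_mem_Icc_top (w : ℕ) : w + 1 ∉ Finset.Icc 1 w := by simp

theorem WXmain (h j : ℕ → R) (h0 : h 0 = 1) (j1 : j 1 = 1)
    (hD : ∀ n : ℕ, 1 ≤ n → n • h n = ∑ r ∈ Finset.Icc 1 n, j r * h (n - r)) :
    ∀ q : ℕ, (∀ k, Wsum j q k = (k.factorial * q.choose k) • h k) ∧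
      (∀ e m, Xsum j q e m = (m.factorial * q.choose m) •
        ∑ s ∈ Finset.Icc (e + 1) (e + 1 + m), j s * h (m + 1 + e - s)) := by
  have h1 : h 1 = 1 := by
    have h2 := hD 1 le_rfl
    simpa [h0, j1] using h2
  intro q
  induction q using Nat.strong_induction_on with
  | _ q IH =>
  -- the W-statement at level q
  have hW : ∀ k, Wsum j q k = (k.factorial * q.choose k) • h k := by
    intro k
    match k, q with
    | 0, q =>
        rw [Wsum, Finset.powersetCard_zero, Finset.sum_singleton, Finset.sort_empty,
          Pdet_nil, Nat.choose_zero_right, h0]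
        simp
    | 1, q =>
        rw [Wsum]
        have hterm : ∀ S ∈ (Finset.Icc 1 q).powersetCard 1,
            Pdet j (S.sort (· ≥ ·)) = 1 := by
          intro S hS
          rcases Finset.card_eq_one.mp (Finset.mem_powersetCard.mp hS).2 with ⟨x, rfl⟩
          rw [Finset.sort_singleton, Pdet_cons,
            Dm_lt j (fun y hy => by simp at hy) le_rfl, Nat.sub_self, j1, Pdet_nil, mul_one]
        rw [Finset.sum_congr rfl hterm, Finset.sum_const, Finset.card_powersetCard,
          Nat.card_Icc]
        simp [h1, mul_comm]
    | (m+2), q =>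
        by_cases hkq : q < m + 2
        · rw [Wsum, Finset.powersetCard_eq_empty.mpr (by rw [Nat.card_Icc]; omega),
            Finset.sum_empty, Nat.choose_eq_zero_of_lt hkq]
          simp
        · obtain ⟨w, rfl⟩ : ∃ w, q = w + 1 := ⟨q - 1, by omega⟩
          obtain ⟨v, rfl⟩ : ∃ v, w = v + 1 := ⟨w - 1, by omega⟩
          -- step 1 : peel off the top element v+1+1
          have e1 : Wsum j (v+1+1) (m+2) = Wsum j (v+1) (m+2) +
              ∑ S' ∈ (Finset.Icc 1 (v+1)).powersetCard (m+1),
                Pdet j ((v+1+1) :: S'.sort (· ≥ ·)) := by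
            rw [Wsum, S.Icc_one_succ (v+1),
              S.sum_powersetCard_insert (not_mem_Icc_top (v+1)) (m+1)]
            rw [Wsum]
            congr 1
            refine Finset.sum_congr rfl fun S' hS' => ?_
            rw [sort_insert_top (fun b hb => ?_)]
            have := (Finset.mem_powersetCard.mp hS').1 hb
            simp only [Finset.mem_Icc] at this
            omega
          -- step 2 : evaluate the second sum
          have e2 : ∑ S' ∈ (Finset.Icc 1 (v+1)).powersetCard (m+1),
              Pdet j ((v+1+1) :: S'.sort (· ≥ ·)) =
              Wsum j (v+1) (m+1) + ((v+1 : ℕ) : R) * Xsum j v 1 m := by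
            rw [S.Icc_one_succ v, S.sum_powersetCard_insert (not_mem_Icc_top v) m]
            have hterm1 : ∀ S' ∈ (Finset.Icc 1 v).powersetCard (m+1),
                Pdet j ((v+1+1) :: S'.sort (· ≥ ·)) = Pdet j (S'.sort (· ≥ ·)) := by
              intro S' hS'
              rw [Pdet_cons, Dm_lt j (fun x hx => by
                have := mem_sort_lt hS' hx; omega) le_rfl, Nat.sub_self, j1, one_mul]
            have hterm2 : ∀ G ∈ (Finset.Icc 1 v).powersetCard m,
                Pdet j ((v+1+1) :: (insert (v+1) G).sort (· ≥ ·)) =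
                  Pdet j ((insert (v+1) G).sort (· ≥ ·)) +
                    ((v+1 : ℕ) : R) * Dm j (v+1+1) (v+1) (G.sort (· ≥ ·)) := by
              intro G hG
              have hins : (insert (v+1) G).sort (· ≥ ·) = (v+1) :: G.sort (· ≥ ·) :=
                sort_insert_top (fun b hb => by
                  have := (Finset.mem_powersetCard.mp hG).1 hb
                  simp only [Finset.mem_Icc] at this; omega)
              rw [hins, Pdet_cons]
              rw [Dm_eq j (fun x hx => by have := mem_sort_lt hG hx; omega) (by omega)]
              rw [show v+1+1 - (v+1) = 1 from by omega, j1, one_mul]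
            rw [Finset.sum_congr rfl hterm1, Finset.sum_congr rfl hterm2,
              Finset.sum_add_distrib, ← Finset.mul_sum]
            rw [Wsum, S.Icc_one_succ v, S.sum_powersetCard_insert (not_mem_Icc_top v) m,
              Xsum]
            ring
          rw [e1, e2, (IH (v+1) (by omega)).1 (m+2), (IH (v+1) (by omega)).1 (m+1),
            (IH v (by omega)).2 1 m]
          -- normalize the Icc bounds and indices from the X-form
          simp only [show (1:ℕ)+1 = 2 from rfl, show 1+1+m = m+2 from by omega,
            show m+1+1 = m+2 from rfl]
          -- use (D1) at m+2
          have hdk : ((m+2 : ℕ) : R) * h (m+2) =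
              h (m+1) + ∑ s ∈ Finset.Icc 2 (m+2), j s * h (m+2-s) := by
            have h2 := hD (m+2) (by omega)
            rw [nsmul_eq_mul] at h2
            rw [show Finset.Icc 1 (m+2) = insert 1 (Finset.Icc 2 (m+2)) from by
              ext x; simp only [Finset.mem_Icc, Finset.mem_insert]; omega] at h2
            rw [Finset.sum_insert (by simp)] at h2
            rw [j1, one_mul, show m+2-1 = m+1 from by omega] at h2
            exact_mod_cast h2
          have n1 : ((v+1) * (m.factorial * v.choose m) : ℕ) =
              (m+1).factorial * (v+1).choose (m+1) := by
            have hh := Nat.add_one_mul_choose_eq v m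
            calc (v+1) * (m.factorial * v.choose m)
                = m.factorial * ((v+1) * v.choose m) := by ring
              _ = m.factorial * ((v+1).choose (m+1) * (m+1)) := by rw [hh]
              _ = (m+1).factorial * (v+1).choose (m+1) := by
                  rw [Nat.factorial_succ]; ring
          have n2 : ((m+2).factorial * (v+1+1).choose (m+2) : ℕ) =
              (m+2).factorial * (v+1).choose (m+2) +
                (m+2).factorial * (v+1).choose (m+1) := by
            rw [show (v+1+1).choose (m+2) = (v+1).choose (m+1) + (v+1).choose (m+2) from
              Nat.choose_succ_succ (v+1) (m+1)]
            ring
          have n3 : ((m+2) * (m+1).factorial : ℕ) = (m+2).factorial :=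
            (Nat.factorial_succ (m+1)).symm
          have n1c : ((v:R)+1) * ((m.factorial : R) * (v.choose m : R)) =
              ((m+1).factorial : R) * ((v+1).choose (m+1) : R) := by
            exact_mod_cast congrArg (Nat.cast (R := R)) n1
          have n2c : ((m+2).factorial : R) * ((v+1+1).choose (m+2) : R) =
              ((m+2).factorial : R) * ((v+1).choose (m+2) : R) +
                ((m+2).factorial : R) * ((v+1).choose (m+1) : R) := by
            exact_mod_cast congrArg (Nat.cast (R := R)) n2
          have n3c : ((m:R)+2) * ((m+1).factorial : R) = ((m+2).factorial : R) := by
            exact_mod_cast congrArg (Nat.cast (R := R)) n3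
          simp only [nsmul_eq_mul]
          push_cast
          push_cast at hdk
          linear_combination (∑ s ∈ Finset.Icc 2 (m+2), j s * h (m+2-s)) * n1c -
            (h (m+2)) * n2c -
            (((m+1).factorial : R) * ((v+1).choose (m+1) : R)) * hdk +
            (((v+1).choose (m+1) : R) * h (m+2)) * n3c
  refine ⟨hW, ?_⟩
  -- the X-statement at level q
  intro e m
  match m, q with
  | 0, q =>
      rw [Xsum, Finset.powersetCard_zero, Finset.sum_singleton, Finset.sort_empty]
      rw [show (Dm j (q+1+e) (q+1) [] : R) = j ((q+1+e) - (q+1) + 1) * Pdet j [] from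
        Dm_lt j (fun x hx => by simp at hx) (by omega)]
      rw [show q+1+e - (q+1) + 1 = e + 1 from by omega, Pdet_nil, mul_one]
      rw [show e + 1 + 0 = e + 1 from rfl, Finset.Icc_self, Finset.sum_singleton]
      rw [show 0+1+e - (e+1) = 0 from by omega, h0, mul_one]
      simp
  | (m'+1), q =>
      by_cases hmq : q < m' + 1
      · rw [Xsum, Finset.powersetCard_eq_empty.mpr (by rw [Nat.card_Icc]; omega),
          Finset.sum_empty, Nat.choose_eq_zero_of_lt hmq]
        simp
      · obtain ⟨v, rfl⟩ : ∃ v, q = v + 1 := ⟨q - 1, by omega⟩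
        have e1 : Xsum j (v+1) e (m'+1) =
            j (e+1) * Wsum j (v+1) (m'+1) + ((v+1 : ℕ) : R) * Xsum j v (e+1) m' := by
          rw [Xsum, S.Icc_one_succ v, S.sum_powersetCard_insert (not_mem_Icc_top v) m']
          have hterm1 : ∀ G ∈ (Finset.Icc 1 v).powersetCard (m'+1),
              Dm j (v+1+1+e) (v+1+1) (G.sort (· ≥ ·)) =
                j (e+1) * Pdet j (G.sort (· ≥ ·)) := by
            intro G hG
            rw [Dm_lt j (fun x hx => by have := mem_sort_lt hG hx; omega) (by omega)]
            rw [show v+1+1+e - (v+1+1) + 1 = e+1 from by omega]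
          have hterm2 : ∀ G ∈ (Finset.Icc 1 v).powersetCard m',
              Dm j (v+1+1+e) (v+1+1) ((insert (v+1) G).sort (· ≥ ·)) =
                j (e+1) * Pdet j ((insert (v+1) G).sort (· ≥ ·)) +
                  ((v+1 : ℕ) : R) * Dm j (v+1+(e+1)) (v+1) (G.sort (· ≥ ·)) := by
            intro G hG
            have hins : (insert (v+1) G).sort (· ≥ ·) = (v+1) :: G.sort (· ≥ ·) :=
              sort_insert_top (fun b hb => by
                have := (Finset.mem_powersetCard.mp hG).1 hb
                simp only [Finset.mem_Icc] at this; omega)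
            rw [hins]
            rw [Dm_eq j (fun x hx => by have := mem_sort_lt hG hx; omega) (by omega)]
            rw [show v+1+1+e - (v+1) = e+1 from by omega,
              show v+1+1+e = v+1+(e+1) from by omega]
          rw [Finset.sum_congr rfl hterm1, Finset.sum_congr rfl hterm2,
            Finset.sum_add_distrib, ← Finset.mul_sum, ← Finset.mul_sum, ← Finset.mul_sum]
          rw [Wsum, S.Icc_one_succ v, S.sum_powersetCard_insert (not_mem_Icc_top v) m',
            Xsum]
          ring
        rw [e1, hW (m'+1), (IH v (by omega)).2 (e+1) m']
        -- align indices
        simp only [show m'+1+(e+1) = m'+1+1+e from by omega]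
        have hIcc : Finset.Icc (e+1) (e+1+(m'+1)) =
            insert (e+1) (Finset.Icc (e+1+1) (e+1+1+m')) := by
          ext x; simp only [Finset.mem_Icc, Finset.mem_insert]; omega
        rw [hIcc, Finset.sum_insert (by simp only [Finset.mem_Icc]; omega)]
        rw [show m'+1+1+e - (e+1) = m'+1 from by omega]
        have n1 : ((v+1) * (m'.factorial * v.choose m') : ℕ) =
            (m'+1).factorial * (v+1).choose (m'+1) := by
          have hh := Nat.add_one_mul_choose_eq v m'
          calc (v+1) * (m'.factorial * v.choose m')
              = m'.factorial * ((v+1) * v.choose m') := by ring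
            _ = m'.factorial * ((v+1).choose (m'+1) * (m'+1)) := by rw [hh]
            _ = (m'+1).factorial * (v+1).choose (m'+1) := by
                rw [Nat.factorial_succ]; ring
        have hc : ((v+1 : ℕ) : R) * ((m'.factorial * v.choose m') •
            (∑ s ∈ Finset.Icc (e+1+1) (e+1+1+m'), j s * h (m'+1+1+e - s))) =
            ((m'+1).factorial * (v+1).choose (m'+1)) •
            (∑ s ∈ Finset.Icc (e+1+1) (e+1+1+m'), j s * h (m'+1+1+e - s)) := by
          rw [← nsmul_eq_mul, smul_smul, n1]
        rw [smul_add, mul_smul_comm, hc]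
end Main


section Bridge

variable {R : Type*} [CommRing R]

/-- the embedding `Fin n ↪ ℕ`, `i ↦ i + 1`. -/
def embFin (n : ℕ) : Fin n ↪ ℕ :=
  ⟨fun i => (i : ℕ) + 1, fun a b hab => by
    have h2 : (a : ℕ) + 1 = (b : ℕ) + 1 := hab
    exact Fin.ext (by omega)⟩

lemma map_univ_Icc (n : ℕ) : (Finset.univ : Finset (Fin n)).map (embFin n) =
    Finset.Icc 1 n := by
  ext x
  simp only [Finset.mem_map, Finset.mem_univ, true_and, Finset.mem_Icc, embFin,
    Function.Embedding.coeFn_mk]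
  constructor
  · rintro ⟨i, rfl⟩
    have h2 : (embFin n) i = (i : ℕ) + 1 := rfl
    have := i.isLt
    show 1 ≤ (i : ℕ) + 1 ∧ (i : ℕ) + 1 ≤ n
    omega
  · intro hx
    refine ⟨⟨x - 1, by omega⟩, ?_⟩
    show x - 1 + 1 = x
    omega

lemma sort_map {n : ℕ} (S : Finset (Fin n)) :
    (S.map (embFin n)).sort (· ≥ ·) =
      (S.sort (· ≥ ·)).map (fun i : Fin n => (i : ℕ) + 1) := by
  refine (fun hp h1 h2 => List.Perm.eq_of_pairwise' (r := (· ≥ ·)) h1 h2 hp) ?_ ?_ ?_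
  · rw [← Multiset.coe_eq_coe, Finset.sort_eq, Finset.map_val, ← Finset.sort_eq (s := S) (r := (· ≥ ·)),
      Multiset.map_coe]
    rfl
  · exact Finset.pairwise_sort _ _
  · exact List.Pairwise.map _ (fun a b hab => by
      have : (b : ℕ) ≤ (a : ℕ) := hab
      omega) (Finset.pairwise_sort S (· ≥ ·))

lemma Jmat_fE (j : ℕ → R) (n : ℕ) (a b : Fin n) :
    Jmat j n a b = fE j ((a : ℕ) + 1) ((b : ℕ) + 1) := by
  simp only [Jmat, fE, Matrix.of_apply]
  by_cases h1 : (b : ℕ) ≤ (a : ℕ)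
  · rw [if_pos h1, if_pos (by omega : (b : ℕ) + 1 ≤ (a : ℕ) + 1),
      show (a : ℕ) + 1 - ((b : ℕ) + 1) = (a : ℕ) - (b : ℕ) from by omega]
  · rw [if_neg h1, if_neg (by omega : ¬((b : ℕ) + 1 ≤ (a : ℕ) + 1))]
    by_cases h2 : (b : ℕ) = (a : ℕ) + 1
    · rw [if_pos h2, if_pos (by omega : (b : ℕ) + 1 = (a : ℕ) + 1 + 1)]
    · rw [if_neg h2, if_neg (by omega : ¬((b : ℕ) + 1 = (a : ℕ) + 1 + 1))]

lemma det_eq_Pdet (j : ℕ → R) (n : ℕ) (S : Finset (Fin n)) :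
    ((Jmat j n).submatrix (fun a : S => (a : Fin n)) (fun a : S => (a : Fin n))).det
      = Pdet j ((S.sort (· ≥ ·)).map (fun i : Fin n => (i : ℕ) + 1)) := by
  classical
  set l := S.sort (· ≥ ·) with hl
  set L := l.map (fun i : Fin n => (i : ℕ) + 1) with hL
  have hnodup : l.Nodup := Finset.sort_nodup _ _
  have hlen : (dupL L).length = l.length := by simp [dupL, hL]
  have hmem : ∀ i : Fin (dupL L).length, l.get (Fin.cast hlen i) ∈ S := fun i =>
    (Finset.mem_sort _).mp (List.get_mem l _)
  let g : Fin (dupL L).length → {x // x ∈ S} := fun i => ⟨l.get (Fin.cast hlen i), hmem i⟩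
  have hinj : Function.Injective g := by
    intro a b hab
    have h2 : Fin.cast hlen a = Fin.cast hlen b :=
      hnodup.get_inj_iff.mp (Subtype.ext_iff.mp hab)
    have h3 := congrArg Fin.val h2
    simp only [Fin.coe_cast] at h3
    exact Fin.ext h3
  have hbij : Function.Bijective g := by
    rw [Fintype.bijective_iff_injective_and_card]
    refine ⟨hinj, ?_⟩
    simp [hlen, Fintype.card_coe, hl, Finset.length_sort]
  rw [← Matrix.det_submatrix_equiv_self (Equiv.ofBijective g hbij), Pdet, Dpl]
  congr 1
  ext i k
  have hget : ∀ i : Fin (dupL L).length,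
      (dupL L).getD (i : ℕ) (0, 0) =
        (((l.get (Fin.cast hlen i) : Fin n) : ℕ) + 1,
          ((l.get (Fin.cast hlen i) : Fin n) : ℕ) + 1) := by
    intro i
    rw [List.getD_eq_getElem _ _ i.isLt]
    simp [dupL, hL, List.getElem_map, List.get_eq_getElem]
    rfl
  simp only [Matrix.submatrix_apply, Matrix.of_apply, Equiv.ofBijective_apply, hget]
  exact Jmat_fE j n _ _

end Bridge

end JmatAux

/-- If `h 0 = 1`, `j 1 = 1` and (D1) holds, then for `0 ≤ k ≤ n` the sum of the
determinants of all `k × k` principal submatrices of `J_n(j̄)` equals `k! * C(n,k) • h k`. -/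
theorem sum_principal_minors_Jmat {R : Type*} [CommRing R] (h j : ℕ → R)
    (h0 : h 0 = 1) (j1 : j 1 = 1)
    (hD : ∀ n : ℕ, 1 ≤ n → n • h n = ∑ r ∈ Finset.Icc 1 n, j r * h (n - r))
    (n : ℕ) (hn : 1 ≤ n) (k : ℕ) (hk : k ≤ n) :
    (∑ S ∈ Finset.powersetCard k (Finset.univ : Finset (Fin n)),
        ((Jmat j n).submatrix (fun a : S => (a : Fin n)) (fun a : S => (a : Fin n))).det) =
      (k.factorial * n.choose k) • h k := by
  classical
  have key := (JmatAux.WXmain h j h0 j1 hD n).1 k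
  rw [← key, JmatAux.Wsum, ← JmatAux.map_univ_Icc n, Finset.powersetCard_map,
    Finset.sum_map]
  refine Finset.sum_congr rfl fun S hS => ?_
  simp only [RelEmbedding.coe_toEmbedding, Finset.mapEmbedding_apply]
  rw [JmatAux.sort_map, JmatAux.det_eq_Pdet]
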